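/- Let ι be a finite type and let A be an increasing event in (ι → Bool), i.e. a set of configurations such that ω ∈ A and ω ≤ ω' coordinatewise (with false ≤ true) imply ω' ∈ A. For p ∈ [0,1] let μ_p denote the product probability measure on ι → Bool under which the coordinates are independent and each equals true with probability p. For i ∈ ι and a configuration ω, say i is pivotal for A at ω if the configuration agreeing with ω off i and equal to true at i lies in A while the configuration agreeing with ω off i and equal to false at i does not. Then for every p ∈ (0,1), the function p ↦ μ_p(A) is differentiable at p with derivative equal to Σ_{i ∈ ι} μ_p({ω : i is pivotal for A at ω}). -/

import Mathlib

open MeasureTheory Set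

/-- The Bernoulli measure on `Bool` giving mass `p` to `true` and `1 - p` to `false`. -/
noncomputable def bernoulliMeasure (p : ℝ) : Measure Bool :=
  ENNReal.ofReal p • Measure.dirac true + ENNReal.ofReal (1 - p) • Measure.dirac false

/-- The product Bernoulli measure on configurations `ι → Bool`: coordinates are
independent and each equals `true` with probability `p`. -/
noncomputable def productBernoulli (ι : Type*) [Fintype ι] (p : ℝ) :
    Measure (ι → Bool) :=
  Measure.pi fun _ => bernoulliMeasure p

instance MR.instFinite (p : ℝ) : IsFiniteMeasure (bernoulliMeasure p) := by
  constructor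
  rw [bernoulliMeasure]
  simp only [Measure.add_apply, Measure.smul_apply, smul_eq_mul, measure_univ, mul_one]
  exact ENNReal.add_lt_top.mpr ⟨ENNReal.ofReal_lt_top, ENNReal.ofReal_lt_top⟩

lemma MR.bernoulli_singleton (t : ℝ) (b : Bool) :
    bernoulliMeasure t {b} = ENNReal.ofReal (cond b t (1 - t)) := by
  cases b <;>
    simp [bernoulliMeasure, Measure.dirac_apply' _ (measurableSet_singleton _)]

lemma MR.prod_singleton {ι : Type*} [Fintype ι] (t : ℝ) (ht : t ∈ Icc (0:ℝ) 1) (ω : ι → Bool) :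
    productBernoulli ι t {ω} = ENNReal.ofReal (∏ i, cond (ω i) t (1 - t)) := by
  have h1 : ({ω} : Set (ι → Bool)) = Set.pi Set.univ fun i => ({ω i} : Set Bool) := by
    rw [Set.univ_pi_singleton]
  rw [productBernoulli, h1, Measure.pi_pi]
  rw [ENNReal.ofReal_prod_of_nonneg]
  · exact Finset.prod_congr rfl fun i _ => MR.bernoulli_singleton t (ω i)
  · intro i _
    cases hb : ω i
    · simpa using by linarith [ht.2]
    · simpa using ht.1

lemma MR.measure_set {ι : Type*} [Fintype ι] [DecidableEq ι] (t : ℝ) (ht : t ∈ Icc (0:ℝ) 1)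
    (B : Set (ι → Bool)) [DecidablePred (· ∈ B)] :
    (productBernoulli ι t B).toReal
      = ∑ ω ∈ Finset.univ.filter (· ∈ B), ∏ i, cond (ω i) t (1 - t) := by
  classical
  have hB : B = ⋃ ω ∈ (Finset.univ.filter (· ∈ B) : Finset (ι → Bool)), ({ω} : Set (ι → Bool)) := by
    ext x; simp
  conv_lhs => rw [hB]
  rw [measure_biUnion_finset]
  · rw [ENNReal.toReal_sum (fun ω _ => by rw [MR.prod_singleton t ht]; exact ENNReal.ofReal_ne_top)]
    refine Finset.sum_congr rfl fun ω _ => ?_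
    rw [MR.prod_singleton t ht, ENNReal.toReal_ofReal]
    exact Finset.prod_nonneg fun i _ => by
      cases hb : ω i
      · simpa using by linarith [ht.2]
      · simpa using ht.1
  · intro a _ b _ hab
    exact Set.disjoint_singleton.mpr hab
  · exact fun ω _ => measurableSet_singleton ω

lemma MR.pair_sum {ι : Type*} [Fintype ι] [DecidableEq ι] (i : ι) (g : (ι → Bool) → ℝ) :
    ∑ ω : ι → Bool, g ω
      = ∑ ω ∈ Finset.univ.filter (fun ω => ω i = true),
          (g ω + g (Function.update ω i false)) := by
  rw [Finset.sum_add_distrib]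
  rw [← Finset.sum_filter_add_sum_filter_not Finset.univ (fun ω => ω i = true) g]
  congr 1
  refine Finset.sum_bij' (fun ω _ => Function.update ω i true)
    (fun ω _ => Function.update ω i false) ?_ ?_ ?_ ?_ ?_
  · intro a ha; simp
  · intro a ha
    simp only [Finset.mem_filter, Finset.mem_univ, true_and] at ha ⊢
    simp
  · intro a ha
    simp only [Finset.mem_filter, Finset.mem_univ, true_and, Bool.not_eq_true] at ha
    simp only [Function.update_idem]
    rw [← ha, Function.update_eq_self]
  · intro a ha
    simp only [Finset.mem_filter, Finset.mem_univ, true_and] at ha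
    simp only [Function.update_idem]
    rw [← ha, Function.update_eq_self]
  · intro a ha
    simp only [Finset.mem_filter, Finset.mem_univ, true_and, Bool.not_eq_true] at ha
    simp only [Function.update_idem]
    rw [← ha, Function.update_eq_self]

/-- `i` is pivotal for the event `A` at the configuration `ω` if switching
coordinate `i` to `true` puts the configuration in `A` while switching it to
`false` takes it out of `A`. -/
def IsPivotal {ι : Type*} [DecidableEq ι] (A : Set (ι → Bool)) (i : ι) (ω : ι → Bool) : Prop :=
  Function.update ω i true ∈ A ∧ Function.update ω i false ∉ A

/-- Margulis–Russo formula: for an increasing event `A` on finitely many independent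
Bernoulli variables, `p ↦ μ_p(A)` is differentiable on `(0,1)` with derivative the sum
over coordinates of the probability that the coordinate is pivotal for `A`. -/
theorem stmt_7 (ι : Type*) [Fintype ι] [DecidableEq ι] (A : Set (ι → Bool))
    (hA : ∀ ω ∈ A, ∀ ω' : ι → Bool, (∀ i, ω i ≤ ω' i) → ω' ∈ A)
    (p : ℝ) (hp : p ∈ Ioo (0 : ℝ) 1) :
    HasDerivAt (fun t => (productBernoulli ι t A).toReal)
      (∑ i : ι, (productBernoulli ι p {ω | IsPivotal A i ω}).toReal) p := by
  classical
  -- the polynomial expression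
  have hderiv : HasDerivAt (fun t => ∑ ω ∈ Finset.univ.filter (· ∈ A),
        ∏ i, cond (ω i) t (1 - t))
      (∑ ω ∈ Finset.univ.filter (· ∈ A), ∑ i : ι,
        (∏ j ∈ Finset.univ.erase i, cond (ω j) p (1 - p)) * (cond (ω i) 1 (-1))) p := by
    apply HasDerivAt.fun_sum
    intro ω _
    have h := HasDerivAt.fun_finsetProd (u := Finset.univ)
      (f := fun i t => cond (ω i) t (1 - t)) (f' := fun i => cond (ω i) 1 (-1)) (x := p)
      (fun i _ => by
        cases h : ω i
        · simpa [h] using ((hasDerivAt_const p (1:ℝ)).fun_sub (hasDerivAt_id' p))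
        · simpa [h] using hasDerivAt_id' p)
    simpa [smul_eq_mul] using h
  -- local equality with the measure
  have heq : (fun t => (productBernoulli ι t A).toReal)
      =ᶠ[nhds p] (fun t => ∑ ω ∈ Finset.univ.filter (· ∈ A), ∏ i, cond (ω i) t (1 - t)) := by
    filter_upwards [Ioo_mem_nhds hp.1 hp.2] with t ht
    exact MR.measure_set t ⟨ht.1.le, ht.2.le⟩ A
  -- identify the derivative value
  have hDval : (∑ ω ∈ Finset.univ.filter (· ∈ A), ∑ i : ι,
        (∏ j ∈ Finset.univ.erase i, cond (ω j) p (1 - p)) * (cond (ω i) 1 (-1)))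
      = ∑ i : ι, (productBernoulli ι p {ω | IsPivotal A i ω}).toReal := by
    rw [Finset.sum_comm]
    refine Finset.sum_congr rfl fun i _ => ?_
    rw [MR.measure_set p ⟨hp.1.le, hp.2.le⟩ {ω | IsPivotal A i ω}]
    rw [Finset.sum_filter, Finset.sum_filter, MR.pair_sum i, MR.pair_sum i]
    refine Finset.sum_congr rfl fun ω hω => ?_
    simp only [Finset.mem_filter, Finset.mem_univ, true_and] at hω
    set ω' := Function.update ω i false with hω'
    have hup_t : Function.update ω i true = ω := by
      nth_rewrite 1 [← hω]; exact Function.update_eq_self i ω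
    have hQ : ∀ j ∈ Finset.univ.erase i, cond (ω' j) p (1 - p) = cond (ω j) p (1 - p) := by
      intro j hj
      rw [hω', Function.update_of_ne (Finset.mem_erase.mp hj).1]
    have hQeq : (∏ j ∈ Finset.univ.erase i, cond (ω' j) p (1 - p))
        = ∏ j ∈ Finset.univ.erase i, cond (ω j) p (1 - p) := Finset.prod_congr rfl hQ
    set Q := ∏ j ∈ Finset.univ.erase i, cond (ω j) p (1 - p) with hQdef
    have hprodω : (∏ j, cond (ω j) p (1 - p)) = p * Q := by
      rw [← Finset.mul_prod_erase Finset.univ _ (Finset.mem_univ i), hω]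
      rfl
    have hprodω' : (∏ j, cond (ω' j) p (1 - p)) = (1 - p) * Q := by
      rw [← Finset.mul_prod_erase Finset.univ _ (Finset.mem_univ i), hω',
        Function.update_self]
      rw [← hω']
      rw [hQeq]
      rfl
    have hpiv : IsPivotal A i ω ↔ (ω ∈ A ∧ ω' ∉ A) := by
      rw [IsPivotal, hup_t, hω']
    have hpiv' : IsPivotal A i ω' ↔ (ω ∈ A ∧ ω' ∉ A) := by
      rw [IsPivotal, hω', Function.update_idem, Function.update_idem, hup_t]
    have hei : cond (ω i) 1 (-1 : ℝ) = 1 := by rw [hω]; rfl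
    have hei' : cond (ω' i) 1 (-1 : ℝ) = -1 := by rw [hω', Function.update_self]; rfl
    have hmono : ω' ∈ A → ω ∈ A := by
      intro h
      refine hA ω' h ω fun j => ?_
      by_cases hji : j = i
      · subst hji; rw [hω', Function.update_self]; exact Bool.false_le _
      · rw [hω', Function.update_of_ne hji]
    by_cases h1 : ω ∈ A <;> by_cases h2 : ω' ∈ A
    · have hnp : ¬ (ω ∈ A ∧ ω' ∉ A) := fun h => h.2 h2
      simp only [Set.mem_setOf_eq, hpiv, hpiv', if_pos h1, if_pos h2, if_neg hnp, hei, hei', hQeq]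
      ring
    · have hpp : ω ∈ A ∧ ω' ∉ A := ⟨h1, h2⟩
      simp only [Set.mem_setOf_eq, hpiv, hpiv', if_pos h1, if_neg h2, if_pos hpp, hei, hei',
        hQeq, hprodω, hprodω']
      ring
    · exact absurd (hmono h2) h1
    · have hnp : ¬ (ω ∈ A ∧ ω' ∉ A) := fun h => h1 h.1
      simp only [Set.mem_setOf_eq, hpiv, hpiv', if_neg h1, if_neg h2, if_neg hnp]
  rw [← hDval]
  exact hderiv.congr_of_eventuallyEq heq
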